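/- Let f and g be loops in a digital image (X,κ) having a common basepoint p. Then there exist trivial extensions f̄ of f and ḡ of g with f̄ homotopic to ḡ holding the endpoints fixed if and only if f_∞ and g_∞ are EC homotopic holding the endpoints fixed. -/

import Mathlib

/-- 2-adjacency (c₁-adjacency) on the natural numbers / digital intervals. -/
def natAdj (a b : ℕ) : Prop := b = a + 1 ∨ a = b + 1

/-- Digital `(κ,μ)`-continuity of a function between digital images. -/
def DigCont {X Y : Type*} (κ : X → X → Prop) (μ : Y → Y → Prop) (f : X → Y) : Prop :=
  ∀ a b, κ a b → f a = f b ∨ μ (f a) (f b)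

/-- `(2,κ)`-continuity for functions on `ℕ* = {0,1,2,…}` with 2-adjacency. -/
def ECCont {X : Type*} (κ : X → X → Prop) (f : ℕ → X) : Prop :=
  ∀ a b, natAdj a b → f a = f b ∨ κ (f a) (f b)

/-- An eventually constant (EC) path in `(X,κ)`. -/
def IsECPath {X : Type*} (κ : X → X → Prop) (f : ℕ → X) : Prop :=
  ECCont κ f ∧ ∃ N, ∀ n, N ≤ n → f n = f N

/-- `N_f`, the least index after which `f` is constant. -/
noncomputable def ecN {X : Type*} (f : ℕ → X) : ℕ :=
  sInf {m | ∀ n, m ≤ n → f n = f m}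

/-- An EC homotopy from `f` to `g` (each stage is an EC path). -/
def IsECHomotopy {X : Type*} (κ : X → X → Prop) (f g : ℕ → X) (k : ℕ)
    (H : ℕ → ℕ → X) : Prop :=
  (∀ n, H n 0 = f n) ∧ (∀ n, H n k = g n) ∧
  (∀ n s t, s ≤ k → t ≤ k → natAdj s t → H n s = H n t ∨ κ (H n s) (H n t)) ∧
  (∀ t, t ≤ k → IsECPath κ (fun n => H n t))

/-- The EC homotopy `H` from `f` to `g` holds the endpoints fixed. -/
def ECHoldsEnds {X : Type*} (f g : ℕ → X) (k : ℕ) (H : ℕ → ℕ → X) : Prop :=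
  f 0 = g 0 ∧ (∀ t, t ≤ k → H 0 t = f 0) ∧
  ∃ c, ∀ n, c ≤ n → f n = g n ∧ ∀ t, t ≤ k → H n t = f n

/-- `f` and `g` are EC homotopic. -/
def ECHomotopic {X : Type*} (κ : X → X → Prop) (f g : ℕ → X) : Prop :=
  ∃ k H, IsECHomotopy κ f g k H

/-- `f` and `g` are EC homotopic holding the endpoints fixed. -/
def ECHomotopicFix {X : Type*} (κ : X → X → Prop) (f g : ℕ → X) : Prop :=
  ∃ k H, IsECHomotopy κ f g k H ∧ ECHoldsEnds f g k H

/-- A finite digital path `f : [0,m]_ℤ → X`, represented by its length `len`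
and its values, frozen (constant) beyond `len`. -/
structure DPath (X : Type*) where
  len : ℕ
  toFun : ℕ → X
  frozen : ∀ n, len ≤ n → toFun n = toFun len

/-- `p_∞ : ℕ* → X`, the eventually constant extension of a finite path. -/
def DPath.inf {X : Type*} (p : DPath X) : ℕ → X := fun n => p.toFun (min n p.len)

/-- `(2,κ)`-continuity of a finite path on its domain `[0,len]_ℤ`. -/
def DPath.IsCont {X : Type*} (κ : X → X → Prop) (p : DPath X) : Prop :=
  ∀ a b, a ≤ p.len → b ≤ p.len → natAdj a b →
    p.toFun a = p.toFun b ∨ κ (p.toFun a) (p.toFun b)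

/-- `f_-`, the restriction of an EC path `f` to `[0, N_f]_ℤ`. -/
noncomputable def ecTrunc {X : Type*} (f : ℕ → X) : DPath X where
  len := ecN f
  toFun := fun n => f (min n (ecN f))
  frozen := by intro n hn; simp [min_eq_right hn]

/-- Concatenation (product) `p * q` of finite paths. -/
def DPath.concat {X : Type*} (p q : DPath X) : DPath X where
  len := p.len + q.len
  toFun := fun t => if t < p.len then p.toFun t else q.toFun (t - p.len)
  frozen := by
    intro n hn
    have h1 : ¬ n < p.len := by omega
    have h2 : ¬ p.len + q.len < p.len := by omega
    simp only [if_neg h1, if_neg h2]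
    rw [q.frozen (n - p.len) (by omega), Nat.add_sub_cancel_left]

/-- A constant (trivial) path. -/
def IsConstPath {X : Type*} (p : DPath X) : Prop := ∀ n, p.toFun n = p.toFun 0

/-- The product `p * l₀ * l₁ * ⋯` of a nonempty family of paths. -/
def concatAll {X : Type*} (p : DPath X) (l : List (DPath X)) : DPath X :=
  l.foldl DPath.concat p

/-- Consecutive paths in the list are composable (endpoints match). -/
def ChainOK {X : Type*} (l : List (DPath X)) : Prop :=
  l.Chain' (fun p q => p.toFun p.len = q.toFun 0)

/-- `TrivExt κ f f'` : the path `f'` is a trivial extension of the path `f`: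
`f = f₁ * ⋯ * f_k`, `f' = F₁ * ⋯ * F_p`, with indices `i₁ < ⋯ < i_k`,
`F_{i_j} = f_j`, and every other `F_i` a constant loop. -/
def TrivExt {X : Type*} (κ : X → X → Prop) (f f' : DPath X) : Prop :=
  ∃ (a : DPath X) (fs : List (DPath X)) (b : DPath X) (Fs : List (DPath X)),
    (∀ r ∈ a :: fs, DPath.IsCont κ r) ∧ (∀ r ∈ b :: Fs, DPath.IsCont κ r) ∧
    ChainOK (a :: fs) ∧ ChainOK (b :: Fs) ∧
    f = concatAll a fs ∧ f' = concatAll b Fs ∧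
    ∃ idx : Fin (a :: fs).length → Fin (b :: Fs).length,
      StrictMono idx ∧
      (∀ j, (b :: Fs).get (idx j) = (a :: fs).get j) ∧
      (∀ i, (∀ j, idx j ≠ i) → IsConstPath ((b :: Fs).get i))

/-- A digital homotopy `H : [0,m]_ℤ × [0,k]_ℤ → X` between paths `F` and `G`. -/
def IsPathHomotopy {X : Type*} (κ : X → X → Prop) (m k : ℕ) (F G : ℕ → X)
    (H : ℕ → ℕ → X) : Prop :=
  (∀ t, t ≤ m → H t 0 = F t) ∧ (∀ t, t ≤ m → H t k = G t) ∧
  (∀ t, t ≤ m → ∀ s₁ s₂, s₁ ≤ k → s₂ ≤ k → natAdj s₁ s₂ →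
    H t s₁ = H t s₂ ∨ κ (H t s₁) (H t s₂)) ∧
  (∀ s, s ≤ k → ∀ t₁ t₂, t₁ ≤ m → t₂ ≤ m → natAdj t₁ t₂ →
    H t₁ s = H t₂ s ∨ κ (H t₁ s) (H t₂ s))

/-- The homotopy `H` between paths `F, G : [0,m]_ℤ → X` holds the endpoints fixed. -/
def PathHoldsEnds {X : Type*} (m k : ℕ) (F G : ℕ → X) (H : ℕ → ℕ → X) : Prop :=
  F 0 = G 0 ∧ F m = G m ∧ ∀ s, s ≤ k → H 0 s = F 0 ∧ H m s = F m

/-- Paths `F, G : [0,m]_ℤ → X` are homotopic. -/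
def PathHomotopic {X : Type*} (κ : X → X → Prop) (m : ℕ) (F G : ℕ → X) : Prop :=
  ∃ k H, IsPathHomotopy κ m k F G H

/-- Paths `F, G : [0,m]_ℤ → X` are homotopic holding the endpoints fixed. -/
def PathHomotopicFix {X : Type*} (κ : X → X → Prop) (m : ℕ) (F G : ℕ → X) : Prop :=
  ∃ k H, IsPathHomotopy κ m k F G H ∧ PathHoldsEnds m k F G H

section AuxDev

variable {X : Type*} {κ : X → X → Prop}

theorem DPath.eq_of {p q : DPath X} (h1 : p.len = q.len) (h2 : p.toFun = q.toFun) : p = q := by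
  cases p; cases q; simp_all

/-- A reparametrization witnessing that `f'` is `f` with pauses inserted. -/
def Reparam (f f' : DPath X) : Prop :=
  ∃ φ : ℕ → ℕ, φ 0 = 0 ∧ (∀ n, φ (n + 1) = φ n ∨ φ (n + 1) = φ n + 1) ∧
    φ f'.len = f.len ∧ ∀ n, n ≤ f'.len → f'.toFun n = f.toFun (φ n)

theorem step_mono {φ : ℕ → ℕ} (h : ∀ n, φ (n + 1) = φ n ∨ φ (n + 1) = φ n + 1) :
    Monotone φ :=
  monotone_nat_of_le_succ fun n => by rcases h n with h' | h' <;> omega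

theorem step_le {φ : ℕ → ℕ} (h0 : φ 0 = 0)
    (h : ∀ n, φ (n + 1) = φ n ∨ φ (n + 1) = φ n + 1) : ∀ n, φ n ≤ n := by
  intro n
  induction n with
  | zero => omega
  | succ n ih => rcases h n with h' | h' <;> omega

theorem reparam_refl (f : DPath X) : Reparam f f :=
  ⟨id, rfl, fun _ => Or.inr rfl, rfl, fun _ _ => rfl⟩

theorem reparam_trans {f g h : DPath X} (h1 : Reparam f g) (h2 : Reparam g h) :
    Reparam f h := by
  obtain ⟨φ₁, e0, es, el, ev⟩ := h1
  obtain ⟨φ₂, d0, ds, dl, dv⟩ := h2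
  refine ⟨fun n => φ₁ (φ₂ n), ?_, ?_, ?_, ?_⟩ <;> beta_reduce
  · rw [d0, e0]
  · intro n
    rcases ds n with h' | h'
    · rw [h']
      left
      rfl
    · rw [h']
      exact es (φ₂ n)
  · rw [dl, el]
  · intro n hn
    have hle : φ₂ n ≤ g.len := dl ▸ step_mono ds hn
    rw [dv n hn, ev _ hle]

theorem DPath.concat_toFun (p q : DPath X) (t : ℕ) :
    (p.concat q).toFun t = if t < p.len then p.toFun t else q.toFun (t - p.len) := rfl

theorem DPath.concat_len (p q : DPath X) : (p.concat q).len = p.len + q.len := rfl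

theorem DPath.concat_assoc (p q r : DPath X) :
    (p.concat q).concat r = p.concat (q.concat r) := by
  refine DPath.eq_of (by simp only [DPath.concat_len]; omega) (funext fun t => ?_)
  simp only [DPath.concat_toFun, DPath.concat_len]
  by_cases h1 : t < p.len <;> by_cases h2 : t < p.len + q.len <;> by_cases h3 : t - p.len < q.len <;> simp only [h1, h2, h3, if_true, if_false] <;> first | rfl | omega | (congr 1; omega)

theorem concatAll_cons (p x : DPath X) (xs : List (DPath X)) :
    concatAll p (x :: xs) = concatAll (p.concat x) xs := rfl

theorem concatAll_nil (p : DPath X) : concatAll p [] = p := rfl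

theorem concatAll_eq (p x : DPath X) (xs : List (DPath X)) :
    concatAll p (x :: xs) = p.concat (concatAll x xs) := by
  induction xs generalizing p x with
  | nil => rfl
  | cons y ys ih => rw [concatAll_cons, ih, DPath.concat_assoc, ← ih]

theorem chainOK_tail {p : DPath X} {l : List (DPath X)} (h : ChainOK (p :: l)) : ChainOK l :=
  List.IsChain.tail h

theorem chainOK_rel {p q : DPath X} {l : List (DPath X)} (h : ChainOK (p :: q :: l)) :
    p.toFun p.len = q.toFun 0 := (List.isChain_cons_cons.mp h).1

theorem concat_end (p q : DPath X) : (p.concat q).toFun (p.concat q).len = q.toFun q.len := by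
  show (p.concat q).toFun (p.len + q.len) = _
  rw [DPath.concat_toFun, if_neg (by omega)]
  congr 1
  omega

theorem chainOK_concat {p c : DPath X} {l : List (DPath X)} (h : ChainOK (p :: c :: l)) :
    ChainOK ((p.concat c) :: l) := by
  cases l with
  | nil => exact List.isChain_singleton _
  | cons d ds =>
    have h1 : ChainOK (c :: d :: ds) := chainOK_tail h
    exact List.isChain_cons_cons.mpr ⟨(concat_end p c).trans (chainOK_rel h1), chainOK_tail h1⟩

theorem concatAll_start : ∀ (xs : List (DPath X)) (x : DPath X), ChainOK (x :: xs) →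
    (concatAll x xs).toFun 0 = x.toFun 0 := by
  intro xs
  induction xs with
  | nil => intro x _; rfl
  | cons y ys ih =>
    intro x h
    rw [concatAll_cons, ih _ (chainOK_concat h), DPath.concat_toFun]
    split_ifs with h'
    · rfl
    · have h0 : 0 - x.len = 0 := by omega
      have hx : x.len = 0 := by omega
      rw [h0, ← chainOK_rel h, hx]

theorem reparam_snoc_const {p c : DPath X} (hc : IsConstPath c)
    (h : p.toFun p.len = c.toFun 0) : Reparam p (p.concat c) := by
  refine ⟨fun n => min n p.len, ?_, ?_, ?_, ?_⟩ <;> beta_reduce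
  · omega
  · intro n
    omega
  · show min (p.len + c.len) p.len = p.len
    omega
  · intro n hn
    rw [DPath.concat_toFun]
    split_ifs with h'
    · rw [min_eq_left (by omega)]
    · rw [hc (n - p.len), ← h, min_eq_right (by omega)]

theorem reparam_cons_const {c q : DPath X} (hc : IsConstPath c)
    (h : c.toFun c.len = q.toFun 0) : Reparam q (c.concat q) := by
  refine ⟨fun n => n - c.len, ?_, ?_, ?_, ?_⟩ <;> beta_reduce
  · omega
  · intro n
    omega
  · show c.len + q.len - c.len = q.len
    omega
  · intro n hn
    rw [DPath.concat_toFun]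
    split_ifs with h'
    · have h0 : n - c.len = 0 := by omega
      rw [h0, ← h, hc n, hc c.len]
    · rfl

theorem reparam_concatAll_const : ∀ (cs : List (DPath X)) (p : DPath X),
    (∀ c ∈ cs, IsConstPath c) → ChainOK (p :: cs) → Reparam p (concatAll p cs) := by
  intro cs
  induction cs with
  | nil => intro p _ _; exact reparam_refl p
  | cons c cs ih =>
    intro p hconst hch
    rw [concatAll_cons]
    refine reparam_trans (reparam_snoc_const (hconst c (by simp)) (chainOK_rel hch)) ?_
    exact ih (p.concat c) (fun d hd => hconst d (by simp [hd])) (chainOK_concat hch)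

theorem reparam_concat {p p' q q' : DPath X} (h1 : Reparam p p') (h2 : Reparam q q')
    (hpq : p.toFun p.len = q.toFun 0) :
    Reparam (p.concat q) (p'.concat q') := by
  obtain ⟨φ₁, e0, es, el, ev⟩ := h1
  obtain ⟨φ₂, d0, ds, dl, dv⟩ := h2
  refine ⟨fun n => if n < p'.len then φ₁ n else p.len + φ₂ (n - p'.len), ?_, ?_, ?_, ?_⟩ <;>
    beta_reduce
  · by_cases h : 0 < p'.len
    · rw [if_pos h]; exact e0
    · rw [if_neg h]
      have h0 : p'.len = 0 := by omega
      have := el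
      rw [h0, e0] at this
      simp [d0, ← this]
  · intro n
    by_cases hA : n + 1 < p'.len
    · rw [if_pos hA, if_pos (show n < p'.len by omega)]
      exact es n
    · by_cases hB : n < p'.len
      · have hn1 : n + 1 = p'.len := by omega
        rw [if_pos hB, if_neg (by omega)]
        have hx : p.len + φ₂ (n + 1 - p'.len) = φ₁ (n + 1) := by
          rw [hn1]
          simp [d0, el]
        rw [hx]
        exact es n
      · rw [if_neg hB, if_neg (by omega)]
        have hx : n + 1 - p'.len = (n - p'.len) + 1 := by omega
        rw [hx]
        rcases ds (n - p'.len) with h' | h' <;> omega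
  · show (if p'.len + q'.len < p'.len then φ₁ (p'.len + q'.len)
      else p.len + φ₂ (p'.len + q'.len - p'.len)) = p.len + q.len
    rw [if_neg (by omega)]
    have hx : p'.len + q'.len - p'.len = q'.len := by omega
    rw [hx, dl]
  · intro n hn
    have hn' : n ≤ p'.len + q'.len := hn
    by_cases hB : n < p'.len
    · rw [if_pos hB, DPath.concat_toFun, DPath.concat_toFun, if_pos hB]
      have hle : φ₁ n ≤ p.len := el ▸ step_mono es (le_of_lt hB)
      rcases lt_or_eq_of_le hle with h' | h'
      · rw [if_pos h']
        exact ev n (le_of_lt hB)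
      · rw [if_neg (by omega)]
        have h0 : φ₁ n - p.len = 0 := by omega
        rw [h0, ← hpq, ← h', ← ev n (le_of_lt hB)]
    · rw [if_neg hB, DPath.concat_toFun, DPath.concat_toFun, if_neg hB, if_neg (by omega)]
      have h2 : p.len + φ₂ (n - p'.len) - p.len = φ₂ (n - p'.len) := by omega
      rw [h2]
      exact dv (n - p'.len) (by omega)

/-- `PExt L L'` : `L'` is obtained from `L` by inserting constant paths. -/
inductive PExt {X : Type*} : List (DPath X) → List (DPath X) → Prop
  | nil : PExt [] []
  | keep (p : DPath X) {l l' : List (DPath X)} : PExt l l' → PExt (p :: l) (p :: l')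
  | skip (c : DPath X) {l l' : List (DPath X)} : IsConstPath c → PExt l l' → PExt l (c :: l')

theorem ext_nil_const : ∀ {l' : List (DPath X)}, PExt ([] : List (DPath X)) l' →
    ∀ c ∈ l', IsConstPath c := by
  intro l'
  induction l' with
  | nil => intro _ c hc; simp at hc
  | cons d ds ih =>
    intro h c hc
    cases h with
    | skip _ hd h' =>
      rcases List.mem_cons.mp hc with h'' | h''
      · subst h''; exact hd
      · exact ih h' c h''

theorem reparam_of_ext : ∀ {L L' : List (DPath X)}, PExt L L' → ChainOK L → ChainOK L' →
    ∀ a fs, L = a :: fs → ∃ b Fs, L' = b :: Fs ∧ Reparam (concatAll a fs) (concatAll b Fs) := by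
  intro L L' h
  induction h with
  | nil => intro _ _ a fs hL; simp at hL
  | keep p h ih =>
    rename_i l l'
    intro hc1 hc2 a fs hL
    injection hL with h1 h2
    subst h1
    subst h2
    cases l with
    | nil => exact ⟨p, l', rfl, reparam_concatAll_const l' p (ext_nil_const h) hc2⟩
    | cons x xs =>
      obtain ⟨y, ys, hl', hrep⟩ := ih (chainOK_tail hc1) (chainOK_tail hc2) x xs rfl
      refine ⟨p, l', rfl, ?_⟩
      subst hl'
      rw [concatAll_eq, concatAll_eq]
      refine reparam_concat (reparam_refl p) hrep ?_
      rw [concatAll_start xs x (chainOK_tail hc1)]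
      exact chainOK_rel hc1
  | skip c hcon h ih =>
    intro hc1 hc2 a fs hL
    obtain ⟨b, Fs, hl', hrep⟩ := ih hc1 (chainOK_tail hc2) a fs hL
    refine ⟨c, _, rfl, ?_⟩
    subst hl'
    rw [concatAll_eq]
    refine reparam_trans hrep (reparam_cons_const hcon ?_)
    rw [concatAll_start Fs b (chainOK_tail hc2)]
    exact chainOK_rel hc2

theorem get_cons_pred {α : Type*} (c : α) (l : List α) (i : Fin (c :: l).length)
    (h : i.val ≠ 0) (h2 : i.val - 1 < l.length) : (c :: l).get i = l.get ⟨i.val - 1, h2⟩ := by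
  rcases i with ⟨v, hv⟩
  cases v with
  | zero => exact absurd rfl h
  | succ v => rfl

theorem ext_of_idx : ∀ (L' L : List (DPath X)) (idx : Fin L.length → Fin L'.length),
    StrictMono idx → (∀ j, L'.get (idx j) = L.get j) →
    (∀ i, (∀ j, idx j ≠ i) → IsConstPath (L'.get i)) → PExt L L' := by
  intro L'
  induction L' with
  | nil =>
    intro L idx _ _ _
    cases L with
    | nil => exact PExt.nil
    | cons a l => exact absurd (idx ⟨0, by simp⟩).isLt (by simp)
  | cons c l' ih =>
    intro L idx hmono hget hconst
    cases L with
    | nil =>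
      refine PExt.skip c ?_ (ih [] (fun j => j.elim0) (fun i => i.elim0) (fun j => j.elim0) ?_)
      · exact hconst ⟨0, Nat.succ_pos _⟩ (fun j => j.elim0)
      · intro i _
        exact hconst ⟨i.val + 1, Nat.succ_lt_succ i.isLt⟩ (fun j => j.elim0)
    | cons a l =>
      by_cases h0 : ∀ j, (idx j).val ≠ 0
      · -- the head of `L'` is not hit, so it is constant
        have hconst0 : IsConstPath c :=
          hconst ⟨0, Nat.succ_pos _⟩ (fun j heq => h0 j (by rw [heq]))
        have hbnd : ∀ j : Fin (a :: l).length, (idx j).val - 1 < l'.length := by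
          intro j
          have h1 : (idx j).val < l'.length + 1 := (idx j).isLt
          have := h0 j
          omega
        refine PExt.skip c hconst0
          (ih (a :: l) (fun j => ⟨(idx j).val - 1, hbnd j⟩) ?_ ?_ ?_)
        · intro i j hij
          have h2 := hmono hij
          rw [Fin.lt_def] at h2
          have hi := h0 i
          have hj := h0 j
          simp only [Fin.mk_lt_mk]
          omega
        · intro j
          exact (get_cons_pred c l' (idx j) (h0 j) (hbnd j)).symm.trans (hget j)
        · intro i hi
          have hcc := hconst ⟨i.val + 1, Nat.succ_lt_succ i.isLt⟩ ?_
          · exact hcc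
          · intro j heq
            refine hi j (Fin.ext ?_)
            show (idx j).val - 1 = i.val
            have hv : (idx j).val = i.val + 1 := congrArg Fin.val heq
            omega
      · -- the head of `L'` is hit, necessarily by the head of `L`
        push_neg at h0
        obtain ⟨j0, hj0⟩ := h0
        have hidx0val : (idx ⟨0, Nat.succ_pos _⟩).val = 0 := by
          by_contra hne
          have hj0ne : j0.val ≠ 0 := by
            intro hz
            have hz' : j0 = ⟨0, Nat.succ_pos _⟩ := Fin.ext hz
            rw [hz'] at hj0
            exact hne hj0
          have hlt : (⟨0, Nat.succ_pos _⟩ : Fin (a :: l).length) < j0 := by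
            rw [Fin.lt_def]
            exact Nat.pos_of_ne_zero hj0ne
          have h2 := hmono hlt
          rw [Fin.lt_def] at h2
          omega
        have hidx0 : idx ⟨0, Nat.succ_pos _⟩ = ⟨0, Nat.succ_pos _⟩ := Fin.ext hidx0val
        have hac : c = a := by
          have hg0 := hget ⟨0, Nat.succ_pos _⟩
          rw [hidx0] at hg0
          exact hg0
        subst hac
        have key : ∀ j : Fin l.length,
            (idx ⟨j.val + 1, Nat.succ_lt_succ j.isLt⟩).val ≠ 0 := by
          intro j
          have hlt : (⟨0, Nat.succ_pos _⟩ : Fin (c :: l).length)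
              < ⟨j.val + 1, Nat.succ_lt_succ j.isLt⟩ := by
            rw [Fin.lt_def]
            exact Nat.succ_pos _
          have h2 := hmono hlt
          rw [Fin.lt_def, hidx0val] at h2
          omega
        have hbnd : ∀ j : Fin l.length,
            (idx ⟨j.val + 1, Nat.succ_lt_succ j.isLt⟩).val - 1 < l'.length := by
          intro j
          have h1 : (idx ⟨j.val + 1, Nat.succ_lt_succ j.isLt⟩).val < l'.length + 1 :=
            (idx _).isLt
          have := key j
          omega
        refine PExt.keep c
          (ih l (fun j => ⟨(idx ⟨j.val + 1, Nat.succ_lt_succ j.isLt⟩).val - 1, hbnd j⟩)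
            ?_ ?_ ?_)
        · intro i j hij
          have h1 : (⟨i.val + 1, Nat.succ_lt_succ i.isLt⟩ : Fin (c :: l).length)
              < ⟨j.val + 1, Nat.succ_lt_succ j.isLt⟩ := by
            rw [Fin.lt_def]
            rw [Fin.lt_def] at hij
            simpa using hij
          have h2 := hmono h1
          rw [Fin.lt_def] at h2
          have k1 := key i
          have k2 := key j
          simp only [Fin.mk_lt_mk]
          omega
        · intro j
          have hg := hget ⟨j.val + 1, Nat.succ_lt_succ j.isLt⟩
          exact (get_cons_pred c l' _ (key j) (hbnd j)).symm.trans (hg.trans rfl)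
        · intro i hi
          have hcc := hconst ⟨i.val + 1, Nat.succ_lt_succ i.isLt⟩ ?_
          · exact hcc
          · intro j heq
            have hv : (idx j).val = i.val + 1 := congrArg Fin.val heq
            have hjpos : j.val ≠ 0 := by
              intro hz
              have hz' : j = ⟨0, Nat.succ_pos _⟩ := Fin.ext hz
              rw [hz'] at hv
              omega
            have hjlt : j.val - 1 < l.length := by
              have := j.isLt
              have hx : j.val < l.length + 1 := this
              omega
            refine hi ⟨j.val - 1, hjlt⟩ (Fin.ext ?_)
            show (idx ⟨(j.val - 1) + 1, _⟩).val - 1 = i.val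
            have hjj : (⟨(j.val - 1) + 1, Nat.succ_lt_succ hjlt⟩ : Fin (c :: l).length) = j :=
              Fin.ext (by simp; omega)
            rw [hjj, hv]
            omega

theorem reparam_of_trivext {f f' : DPath X} (h : TrivExt κ f f') : Reparam f f' := by
  obtain ⟨a, fs, b, Fs, _, _, hch1, hch2, hfe, hfe', idx, hmono, hget, hconst⟩ := h
  obtain ⟨b', Fs', heq, hrep⟩ :=
    reparam_of_ext (ext_of_idx (b :: Fs) (a :: fs) idx hmono hget hconst) hch1 hch2 a fs rfl
  injection heq with h1 h2
  subst h1
  subst h2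
  rw [hfe, hfe']
  exact hrep

theorem inf_cont {p : DPath X} (hp : p.IsCont κ) : ECCont κ p.inf := by
  intro a b hab
  have hab' : b = a + 1 ∨ a = b + 1 := hab
  rcases eq_or_ne (min a p.len) (min b p.len) with h | h
  · left
    show p.toFun _ = p.toFun _
    rw [h]
  · refine hp (min a p.len) (min b p.len) (by omega) (by omega) ?_
    show min b p.len = min a p.len + 1 ∨ min a p.len = min b p.len + 1
    omega

theorem eccont_step {F : ℕ → X} (hF : ECCont κ F) {ψ : ℕ → ℕ}
    (hψ : ∀ n, ψ (n + 1) = ψ n ∨ ψ (n + 1) = ψ n + 1) :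
    ∀ a b, natAdj a b → F (ψ a) = F (ψ b) ∨ κ (F (ψ a)) (F (ψ b)) := by
  intro a b hab
  have hab' : b = a + 1 ∨ a = b + 1 := hab
  rcases eq_or_ne (ψ a) (ψ b) with h | h
  · left
    rw [h]
  · refine hF _ _ ?_
    show ψ b = ψ a + 1 ∨ ψ a = ψ b + 1
    rcases hab' with h' | h'
    · subst h'
      rcases hψ a with h2 | h2 <;> omega
    · subst h'
      rcases hψ b with h2 | h2 <;> omega

theorem ec_of_reparam {f f' : DPath X} (hf : f.IsCont κ) (h : Reparam f f') :
    ECHomotopicFix κ f'.inf f.inf := by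
  obtain ⟨φ, e0, es, el, ev⟩ := h
  have hmono := step_mono es
  have hle := step_le e0 es
  have hmm : f.len ≤ f'.len := by
    rw [← el]
    exact hle f'.len
  have hΦm : ∀ n, φ (min n f'.len) ≤ f.len := fun n => el ▸ hmono (min_le_right n f'.len)
  have hΦle : ∀ n, φ (min n f'.len) ≤ n := fun n => le_trans (hle _) (min_le_left _ _)
  have hinf : ∀ x, f.len ≤ x → f.inf x = f.toFun f.len := fun x hx => by
    show f.toFun _ = _
    rw [min_eq_right hx]
  have hΦge : ∀ n, f'.len ≤ n → φ (min n f'.len) = f.len := fun n hn => by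
    rw [min_eq_right hn, el]
  have hstep : ∀ n, φ (min (n + 1) f'.len) = φ (min n f'.len) ∨
      φ (min (n + 1) f'.len) = φ (min n f'.len) + 1 := by
    intro n
    rcases Nat.lt_or_ge n f'.len with hA | hA
    · rw [min_eq_left (by omega), min_eq_left (by omega)]
      exact es n
    · rw [min_eq_right (by omega), min_eq_right (by omega)]
      left; rfl
  refine ⟨f'.len, fun n t => f.inf (min (φ (min n f'.len) + t) n),
    ⟨?_, ?_, ?_, ?_⟩, ?_, ?_, ?_⟩ <;> beta_reduce
  · intro n
    have h1 : min (φ (min n f'.len) + 0) n = φ (min n f'.len) := by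
      have := hΦle n
      omega
    rw [h1]
    show f.toFun (min (φ (min n f'.len)) f.len) = f'.toFun (min n f'.len)
    rw [min_eq_left (hΦm n), ev _ (min_le_right n f'.len)]
  · intro n
    rcases Nat.lt_or_ge n f'.len with hA | hA
    · have h1 : min (φ (min n f'.len) + f'.len) n = n := by
        have := hΦle n
        omega
      rw [h1]
    · rw [hΦge n hA]
      rcases Nat.lt_or_ge n (f.len + f'.len) with hB | hB
      · rw [min_eq_right (by omega)]
      · rw [min_eq_left (by omega), hinf _ (by omega), hinf _ (by omega)]
  · intro n s t _ _ hst
    exact eccont_step (inf_cont hf) (ψ := fun t => min (φ (min n f'.len) + t) n)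
      (fun u => by beta_reduce; omega) s t hst
  · intro t ht
    constructor
    · refine eccont_step (inf_cont hf) (ψ := fun n => min (φ (min n f'.len) + t) n) ?_
      intro n
      beta_reduce
      rcases hstep n with h' | h' <;> omega
    · refine ⟨f'.len + f.len + t, fun n hn => ?_⟩
      beta_reduce
      rw [hΦge n (by omega), hΦge _ (by omega), min_eq_left (by omega), min_eq_left (by omega)]
  · show f'.toFun (min 0 f'.len) = f.toFun (min 0 f.len)
    rw [min_eq_left (Nat.zero_le _), min_eq_left (Nat.zero_le _), ev 0 (Nat.zero_le _), e0]
  · intro t ht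
    have h1 : min (φ (min 0 f'.len) + t) 0 = 0 := by omega
    rw [h1]
    show f.toFun (min 0 f.len) = f'.toFun (min 0 f'.len)
    rw [min_eq_left (Nat.zero_le _), min_eq_left (Nat.zero_le _), ev 0 (Nat.zero_le _), e0]
  · refine ⟨f'.len + f'.len + f.len, fun n hn => ⟨?_, fun t ht => ?_⟩⟩
    · show f'.toFun (min n f'.len) = f.toFun (min n f.len)
      rw [min_eq_right (by omega), min_eq_right (by omega), ev f'.len le_rfl, el]
    · rw [hΦge n (by omega), min_eq_left (by omega), hinf _ (by omega)]
      show f.toFun f.len = f'.toFun (min n f'.len)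
      rw [min_eq_right (by omega), ev f'.len le_rfl, el]

theorem echf_symm {f g : ℕ → X} (h : ECHomotopicFix κ f g) : ECHomotopicFix κ g f := by
  obtain ⟨k, H, ⟨h1, h2, h3, h4⟩, he1, he2, c, hc⟩ := h
  refine ⟨k, fun n t => H n (k - t), ⟨?_, ?_, ?_, ?_⟩, he1.symm, ?_, c, ?_⟩ <;> beta_reduce
  · intro n
    rw [Nat.sub_zero]
    exact h2 n
  · intro n
    rw [Nat.sub_self]
    exact h1 n
  · intro n s t hs ht hst
    refine h3 n (k - s) (k - t) (by omega) (by omega) ?_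
    have hst' : t = s + 1 ∨ s = t + 1 := hst
    show k - t = k - s + 1 ∨ k - s = k - t + 1
    omega
  · intro t ht
    exact h4 (k - t) (by omega)
  · intro t ht
    rw [he2 (k - t) (by omega), he1]
  · intro n hn
    obtain ⟨hgf, hH⟩ := hc n hn
    exact ⟨hgf.symm, fun t ht => (hH (k - t) (by omega)).trans hgf⟩

theorem echf_trans {f g h : ℕ → X} (h1 : ECHomotopicFix κ f g) (h2 : ECHomotopicFix κ g h) :
    ECHomotopicFix κ f h := by
  obtain ⟨k₁, H₁, ⟨a1, a2, a3, a4⟩, e1, e2, c₁, ec1⟩ := h1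
  obtain ⟨k₂, H₂, ⟨b1, b2, b3, b4⟩, d1, d2, c₂, ec2⟩ := h2
  have key : ∀ n, H₁ n k₁ = H₂ n 0 := fun n => (a2 n).trans (b1 n).symm
  refine ⟨k₁ + k₂, fun n t => if t ≤ k₁ then H₁ n t else H₂ n (t - k₁),
    ⟨?_, ?_, ?_, ?_⟩, e1.trans d1, ?_, max c₁ c₂, ?_⟩ <;> beta_reduce
  · intro n
    rw [if_pos (Nat.zero_le _)]
    exact a1 n
  · intro n
    by_cases hk : k₁ + k₂ ≤ k₁
    · rw [if_pos hk]
      have hk2 : k₂ = 0 := by omega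
      have hb2 := b2 n
      rw [hk2] at hb2
      have hgh : g n = h n := (b1 n).symm.trans hb2
      rw [(by omega : k₁ + k₂ = k₁), a2 n]
      exact hgh
    · rw [if_neg hk, (by omega : k₁ + k₂ - k₁ = k₂)]
      exact b2 n
  · intro n s t hs ht hst
    have hst' : t = s + 1 ∨ s = t + 1 := hst
    by_cases h1s : s ≤ k₁ <;> by_cases h1t : t ≤ k₁
    · rw [if_pos h1s, if_pos h1t]
      exact a3 n s t h1s h1t hst
    · rw [if_pos h1s, if_neg h1t]
      have hs' : s = k₁ := by omega
      have ht' : t - k₁ = 1 := by omega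
      rw [hs', ht', key n]
      exact b3 n 0 1 (by omega) (by omega) (Or.inl rfl)
    · rw [if_neg h1s, if_pos h1t]
      have ht2 : t = k₁ := by omega
      have hs2 : s - k₁ = 1 := by omega
      rw [ht2, hs2, key n]
      exact b3 n 1 0 (by omega) (by omega) (Or.inr rfl)
    · rw [if_neg h1s, if_neg h1t]
      refine b3 n (s - k₁) (t - k₁) (by omega) (by omega) ?_
      show t - k₁ = (s - k₁) + 1 ∨ (s - k₁) = (t - k₁) + 1
      omega
  · intro t ht
    by_cases h1t : t ≤ k₁
    · simp only [if_pos h1t]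
      exact a4 t h1t
    · simp only [if_neg h1t]
      exact b4 (t - k₁) (by omega)
  · intro t ht
    by_cases h1t : t ≤ k₁
    · rw [if_pos h1t]
      exact e2 t h1t
    · rw [if_neg h1t, d2 (t - k₁) (by omega)]
      exact e1.symm
  · intro n hn
    have hc1 := ec1 n (le_trans (le_max_left _ _) hn)
    have hc2 := ec2 n (le_trans (le_max_right _ _) hn)
    refine ⟨hc1.1.trans hc2.1, fun t ht => ?_⟩
    by_cases h1t : t ≤ k₁
    · rw [if_pos h1t]
      exact hc1.2 t h1t
    · rw [if_neg h1t, hc2.2 (t - k₁) (by omega)]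
      exact hc1.1.symm

theorem ec_of_path {f' g' : DPath X} (hlen : f'.len = g'.len)
    (h : PathHomotopicFix κ f'.len f'.toFun g'.toFun) :
    ECHomotopicFix κ f'.inf g'.inf := by
  obtain ⟨k, K, ⟨a1, a2, a3, a4⟩, e1, e2, e3⟩ := h
  refine ⟨k, fun n t => K (min n f'.len) t, ⟨?_, ?_, ?_, ?_⟩, ?_, ?_, f'.len, ?_⟩ <;> beta_reduce
  · intro n
    exact a1 _ (min_le_right _ _)
  · intro n
    rw [a2 _ (min_le_right _ _)]
    show g'.toFun (min n f'.len) = g'.toFun (min n g'.len)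
    rw [hlen]
  · intro n s t hs ht hst
    exact a3 _ (min_le_right _ _) s t hs ht hst
  · intro t ht
    constructor
    · intro p q hpq
      rcases eq_or_ne (min p f'.len) (min q f'.len) with hh | hh
      · left
        beta_reduce
        rw [hh]
      · refine a4 t ht _ _ (min_le_right _ _) (min_le_right _ _) ?_
        have hpq' : q = p + 1 ∨ p = q + 1 := hpq
        show min q f'.len = min p f'.len + 1 ∨ min p f'.len = min q f'.len + 1
        omega
    · exact ⟨f'.len, fun n hn => by beta_reduce; rw [min_eq_right hn, min_eq_right le_rfl]⟩
  · show f'.toFun (min 0 f'.len) = g'.toFun (min 0 g'.len)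
    rw [min_eq_left (Nat.zero_le _), min_eq_left (Nat.zero_le _)]
    exact e1
  · intro t ht
    rw [min_eq_left (Nat.zero_le _), (e3 t ht).1]
    show f'.toFun 0 = f'.toFun (min 0 f'.len)
    rw [min_eq_left (Nat.zero_le _)]
  · intro n hn
    constructor
    · show f'.toFun (min n f'.len) = g'.toFun (min n g'.len)
      rw [min_eq_right hn, min_eq_right (hlen ▸ hn), ← hlen]
      exact e2
    · intro t ht
      rw [min_eq_right hn, (e3 t ht).2]
      show f'.toFun f'.len = f'.toFun (min n f'.len)
      rw [min_eq_right hn]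

/-- A constant path. -/
def constPath (x : X) (r : ℕ) : DPath X := ⟨r, fun _ => x, fun _ _ => rfl⟩

theorem trivext_concat_const {f : DPath X} (hf : f.IsCont κ) {x : X}
    (hx : f.toFun f.len = x) (r : ℕ) : TrivExt κ f (f.concat (constPath x r)) := by
  refine ⟨f, [], f, [constPath x r], ?_, ?_, List.isChain_singleton f, ?_, rfl, rfl,
    fun _ => ⟨0, by simp⟩, ?_, ?_, ?_⟩
  · intro p hp
    rcases List.mem_singleton.mp hp with h
    subst h
    exact hf
  · intro p hp
    rcases List.mem_cons.mp hp with h | h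
    · subst h
      exact hf
    · rcases List.mem_singleton.mp h with h'
      subst h'
      intro a b _ _ _
      left
      rfl
  · exact List.isChain_cons_cons.mpr ⟨hx, List.isChain_singleton _⟩
  · intro i j hij
    rw [Fin.lt_def] at hij
    have hi : i.val < 1 := i.isLt
    have hj : j.val < 1 := j.isLt
    exact absurd hij (by omega)
  · intro j
    have hj : j = ⟨0, by simp⟩ := Fin.ext (by
      show j.val = (0 : ℕ)
      have h1 : j.val < 1 := j.isLt
      omega)
    rw [hj]
    rfl
  · intro i hi
    have h0 := hi ⟨0, by simp⟩
    have h1 : i = ⟨1, by simp⟩ := by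
      rcases i with ⟨iv, hiv⟩
      simp only [ne_eq, Fin.mk.injEq] at h0 ⊢
      simp at hiv
      omega
    subst h1
    intro n
    rfl

end AuxDev

/-- Loops `f`, `g` at a common basepoint `b` have trivial extensions
that are homotopic holding the endpoints fixed iff `f_∞` and `g_∞` are EC homotopic
holding the endpoints fixed. -/
theorem trivial_extensions_iff_ec_homotopic {X : Type*} (κ : X → X → Prop)
    (hκ : Symmetric κ) (b : X) (f g : DPath X)
    (hf : f.IsCont κ) (hg : g.IsCont κ)
    (hf0 : f.toFun 0 = b) (hfm : f.toFun f.len = b)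
    (hg0 : g.toFun 0 = b) (hgm : g.toFun g.len = b) :
    (∃ f' g' : DPath X, TrivExt κ f f' ∧ TrivExt κ g g' ∧ f'.len = g'.len ∧
       PathHomotopicFix κ f'.len f'.toFun g'.toFun) ↔
    ECHomotopicFix κ f.inf g.inf := by
  constructor
  · rintro ⟨f', g', htf, htg, hlen, hpath⟩
    have h1 := ec_of_reparam hf (reparam_of_trivext htf)
    have h2 := ec_of_reparam hg (reparam_of_trivext htg)
    have h3 := ec_of_path hlen hpath
    exact echf_trans (echf_trans (echf_symm h1) h3) h2
  · rintro ⟨k, H, ⟨a1, a2, a3, a4⟩, e1, e2, c, ec⟩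
    set m := c + f.len + g.len with hm
    have hflen : (f.concat (constPath b (m - f.len))).len = m := by
      show f.len + (m - f.len) = m
      omega
    have hglen : (g.concat (constPath b (m - g.len))).len = m := by
      show g.len + (m - g.len) = m
      omega
    have hftf : (f.concat (constPath b (m - f.len))).toFun = f.inf := by
      funext n
      show (if n < f.len then f.toFun n else b) = f.toFun (min n f.len)
      split_ifs with h'
      · rw [min_eq_left (by omega)]
      · rw [min_eq_right (by omega), hfm]
    have hgtg : (g.concat (constPath b (m - g.len))).toFun = g.inf := by
      funext n
      show (if n < g.len then g.toFun n else b) = g.toFun (min n g.len)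
      split_ifs with h'
      · rw [min_eq_left (by omega)]
      · rw [min_eq_right (by omega), hgm]
    refine ⟨f.concat (constPath b (m - f.len)), g.concat (constPath b (m - g.len)),
      trivext_concat_const hf hfm _, trivext_concat_const hg hgm _, ?_, ?_⟩
    · rw [hflen, hglen]
    · rw [hflen, hftf, hgtg]
      refine ⟨k, H, ⟨?_, ?_, ?_, ?_⟩, e1, (ec m (by omega)).1, ?_⟩
      · intro t _
        exact a1 t
      · intro t _
        exact a2 t
      · intro t _ s₁ s₂ hs1 hs2 hadj
        exact a3 t s₁ s₂ hs1 hs2 hadj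
      · intro s hs t₁ t₂ _ _ hadj
        exact (a4 s hs).1 t₁ t₂ hadj
      · intro s hs
        exact ⟨e2 s hs, (ec m (by omega)).2 s hs⟩
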